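/- For t ∈ T, the cell V_T(T \ {t}) is nonempty if and only if t is an extreme point of the convex hull of T. -/

import Mathlib

open Finset Metric
open scoped Classical RealInnerProductSpace

lemma key_iff {n : ℕ} (x t s : EuclideanSpace ℝ (Fin n)) :
    dist x s ≤ dist x t ↔ ‖s - t‖ ^ 2 ≤ 2 * ⟪x - t, s - t⟫ := by
  rw [dist_eq_norm, dist_eq_norm]
  have h : x - s = (x - t) - (s - t) := by abel
  rw [h]
  have e : ‖(x - t) - (s - t)‖ ^ 2 = ‖x - t‖ ^ 2 - 2 * ⟪x - t, s - t⟫ + ‖s - t‖ ^ 2 :=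
    norm_sub_sq_real (x - t) (s - t)
  constructor
  · intro hle
    nlinarith [norm_nonneg ((x - t) - (s - t)), norm_nonneg (x - t)]
  · intro hle
    nlinarith [norm_nonneg ((x - t) - (s - t)), norm_nonneg (x - t)]

/-- The multipoint (higher-order) Voronoi cell of `S` within the set of sites `T`. -/
def vcell {n : ℕ} (T S : Finset (EuclideanSpace ℝ (Fin n))) :
    Set (EuclideanSpace ℝ (Fin n)) :=
  {x | ∀ s ∈ S, ∀ t ∈ T \ S, dist x s ≤ dist x t}

theorem stmt_3 {n : ℕ} (T : Finset (EuclideanSpace ℝ (Fin n)))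
    (hT : 2 ≤ T.card) (t : EuclideanSpace ℝ (Fin n)) (ht : t ∈ T) :
    (vcell T (T.erase t)).Nonempty ↔
      t ∉ convexHull ℝ (↑(T.erase t) : Set (EuclideanSpace ℝ (Fin n))) := by
  have htT : t ∈ T \ T.erase t := by simp [ht]
  have hTS : ∀ t' ∈ T \ T.erase t, t' = t := by
    intro t' h
    simp only [Finset.mem_sdiff, Finset.mem_erase, not_and] at h
    by_contra hne
    exact (h.2 hne) h.1
  constructor
  · rintro ⟨x, hx⟩ htc
    have hS : ∀ s ∈ T.erase t, ⟪x - t, t⟫ < ⟪x - t, s⟫ := by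
      intro s hs
      have h1 : dist x s ≤ dist x t := hx s hs t htT
      rw [key_iff] at h1
      have hst : s ≠ t := Finset.ne_of_mem_erase hs
      have hpos : 0 < ‖s - t‖ ^ 2 := by
        have h0 : s - t ≠ 0 := sub_ne_zero.mpr hst
        exact pow_pos (norm_pos_iff.mpr h0) 2
      have h2 : ⟪x - t, s - t⟫ = ⟪x - t, s⟫ - ⟪x - t, t⟫ := inner_sub_right _ _ _
      linarith
    have hconv : convexHull ℝ (↑(T.erase t) : Set (EuclideanSpace ℝ (Fin n))) ⊆
        {y | ⟪x - t, t⟫ < ⟪x - t, y⟫} := by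
      apply convexHull_min
      · intro s hs
        exact hS s (by exact_mod_cast hs)
      · exact convex_halfSpace_gt
          ⟨fun a b => inner_add_right _ _ _, fun c a => real_inner_smul_right _ _ _⟩ _
    simpa using hconv htc
  · intro htc
    obtain ⟨f, u, hfu, hub⟩ :=
      geometric_hahn_banach_point_closed (convex_convexHull ℝ _)
        ((T.erase t).finite_toSet.isClosed_convexHull ℝ) htc
    set v := (InnerProductSpace.toDual ℝ (EuclideanSpace ℝ (Fin n))).symm f with hvdef
    have hv : ∀ y, ⟪v, y⟫ = f y := fun y => InnerProductSpace.toDual_symm_apply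
    set δ := u - f t with hδ
    have hδpos : 0 < δ := by simp [hδ]; linarith
    have hne : (T.erase t).Nonempty := by
      rw [← Finset.card_pos, Finset.card_erase_of_mem ht]; omega
    set g : EuclideanSpace ℝ (Fin n) → ℝ := fun s => ‖s - t‖ ^ 2 / (2 * δ) with hg
    set r := (T.erase t).sup' hne g with hrdef
    have hr0 : 0 ≤ r := by
      obtain ⟨s, hs⟩ := hne
      refine le_trans ?_ (Finset.le_sup' g hs)
      positivity
    refine ⟨t + r • v, ?_⟩
    intro s hs t' ht'
    rw [hTS t' ht', key_iff]
    have he : (t + r • v) - t = r • v := by abel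
    rw [he, real_inner_smul_left]
    have hs' : s ∈ convexHull ℝ (↑(T.erase t) : Set (EuclideanSpace ℝ (Fin n))) :=
      subset_convexHull ℝ _ (by exact_mod_cast hs)
    have h1 : u < f s := hub s hs'
    have h2 : ⟪v, s - t⟫ = f s - f t := by rw [inner_sub_right, hv, hv]
    have h3 : δ ≤ ⟪v, s - t⟫ := by rw [h2]; linarith
    have h4 : ‖s - t‖ ^ 2 / (2 * δ) ≤ r := Finset.le_sup' g hs
    have h5 : ‖s - t‖ ^ 2 ≤ 2 * δ * r := by
      rw [div_le_iff₀ (by positivity)] at h4; linarith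
    nlinarith
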